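/- For real numbers m, n, p, q with n ≤ m and q ≤ p (and m, n, p, q ≥ 0), (m² − n²)(p² − q²) ≤ (mp − nq)². Consequently, if H is an inner product space, p a probability vector, xᵢ, yᵢ ∈ H, a, b ∈ H, r, s ≥ 0 with ‖xᵢ − a‖ ≤ r and ‖yᵢ − b‖ ≤ s for all i, then |∑ᵢ pᵢ⟨xᵢ,yᵢ⟩ − ⟨∑ᵢ pᵢxᵢ, ∑ᵢ pᵢyᵢ⟩| ≤ rs − ‖∑ᵢ pᵢ(xᵢ − a)‖·‖∑ᵢ pᵢ(yᵢ − b)‖. -/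

import Mathlib

open scoped InnerProductSpace
open Finset

section helpers
variable {H : Type*} [NormedAddCommGroup H] [InnerProductSpace ℂ H]
variable {N : ℕ} (p : Fin N → ℝ)

lemma rg_sum_inner_left (f : Fin N → H) (w : H) :
    ∑ i, (p i : ℂ) * ⟪f i, w⟫_ℂ = ⟪∑ i, (p i : ℂ) • f i, w⟫_ℂ := by
  rw [sum_inner]
  refine Finset.sum_congr rfl fun i _ => ?_
  rw [inner_smul_left, Complex.conj_ofReal]

lemma rg_sum_inner_right (f : Fin N → H) (w : H) :
    ∑ i, (p i : ℂ) * ⟪w, f i⟫_ℂ = ⟪w, ∑ i, (p i : ℂ) • f i⟫_ℂ := by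
  rw [inner_sum]
  refine Finset.sum_congr rfl fun i _ => ?_
  rw [inner_smul_right]

lemma rg_sum_const (hsum : ∑ i, p i = 1) (c : H) :
    ∑ i : Fin N, (p i : ℂ) • c = c := by
  rw [← Finset.sum_smul]
  have : ∑ i, (p i : ℂ) = 1 := by push_cast [← Complex.ofReal_sum]; norm_cast
  rw [this, one_smul]

lemma rg_shift (hsum : ∑ i, p i = 1) (u v : Fin N → H) (c d : H) :
    ∑ i, (p i : ℂ) * ⟪u i + c, v i + d⟫_ℂ
      - ⟪(∑ i, (p i : ℂ) • u i) + c, (∑ i, (p i : ℂ) • v i) + d⟫_ℂ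
    = ∑ i, (p i : ℂ) * ⟪u i, v i⟫_ℂ
      - ⟪∑ i, (p i : ℂ) • u i, ∑ i, (p i : ℂ) • v i⟫_ℂ := by
  have hcd : ∑ i : Fin N, (p i : ℂ) * ⟪c, d⟫_ℂ = ⟪c, d⟫_ℂ := by
    rw [← Finset.sum_mul]
    have : ∑ i, (p i : ℂ) = 1 := by push_cast [← Complex.ofReal_sum]; norm_cast
    rw [this, one_mul]
  simp only [inner_add_left, inner_add_right, mul_add, Finset.sum_add_distrib,
    rg_sum_inner_left p, rg_sum_inner_right p, hcd, rg_sum_const p hsum]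
  ring

end helpers

section helpers2
variable {H : Type*} [NormedAddCommGroup H] [InnerProductSpace ℂ H]
variable {N : ℕ} (p : Fin N → ℝ)

lemma rg_norm_sum_le (hp : ∀ i, 0 ≤ p i) (hsum : ∑ i, p i = 1)
    (u : Fin N → H) (r : ℝ) (hu : ∀ i, ‖u i‖ ≤ r) :
    ‖∑ i, (p i : ℂ) • u i‖ ≤ r := by
  calc ‖∑ i, (p i : ℂ) • u i‖ ≤ ∑ i, ‖(p i : ℂ) • u i‖ := norm_sum_le _ _
    _ ≤ ∑ i, p i * r := by
        refine Finset.sum_le_sum fun i _ => ?_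
        rw [norm_smul, Complex.norm_real, Real.norm_eq_abs, abs_of_nonneg (hp i)]
        exact mul_le_mul_of_nonneg_left (hu i) (hp i)
    _ = r := by rw [← Finset.sum_mul, hsum, one_mul]

lemma rg_variance (hp : ∀ i, 0 ≤ p i) (hsum : ∑ i, p i = 1)
    (u : Fin N → H) (r : ℝ) (hu : ∀ i, ‖u i‖ ≤ r) :
    ∑ i, p i * ‖u i - ∑ j, (p j : ℂ) • u j‖ ^ 2
      ≤ r ^ 2 - ‖∑ j, (p j : ℂ) • u j‖ ^ 2 := by
  set U := ∑ j, (p j : ℂ) • u j with hU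
  have hre : ∑ i, p i * RCLike.re (K := ℂ) ⟪u i, U⟫_ℂ = ‖U‖ ^ 2 := by
    have h1 : ∑ i, (p i : ℂ) * ⟪u i, U⟫_ℂ = ⟪U, U⟫_ℂ := rg_sum_inner_left p u U
    have h2 := congrArg (RCLike.re (K := ℂ)) h1
    rw [map_sum] at h2
    rw [← inner_self_eq_norm_sq (𝕜 := ℂ) U, ← h2]
    refine Finset.sum_congr rfl fun i _ => ?_
    simp [RCLike.re_ofReal_mul]
  have hexp : ∀ i : Fin N, ‖u i - U‖ ^ 2
      = ‖u i‖ ^ 2 - 2 * RCLike.re (K := ℂ) ⟪u i, U⟫_ℂ + ‖U‖ ^ 2 := fun i =>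
    norm_sub_sq (𝕜 := ℂ) _ _
  have : ∑ i, p i * ‖u i - U‖ ^ 2
      = ∑ i, p i * ‖u i‖ ^ 2 - ‖U‖ ^ 2 := by
    calc ∑ i, p i * ‖u i - U‖ ^ 2
        = ∑ i, (p i * ‖u i‖ ^ 2 - 2 * (p i * RCLike.re (K := ℂ) ⟪u i, U⟫_ℂ)
            + p i * ‖U‖ ^ 2) := by
          refine Finset.sum_congr rfl fun i _ => ?_; rw [hexp i]; ring
      _ = ∑ i, p i * ‖u i‖ ^ 2 - 2 * ‖U‖ ^ 2 + ‖U‖ ^ 2 := by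
          rw [Finset.sum_add_distrib, Finset.sum_sub_distrib, ← Finset.mul_sum, hre,
            ← Finset.sum_mul, hsum, one_mul]
      _ = ∑ i, p i * ‖u i‖ ^ 2 - ‖U‖ ^ 2 := by ring
  rw [this]
  have hle : ∑ i, p i * ‖u i‖ ^ 2 ≤ r ^ 2 := by
    calc ∑ i, p i * ‖u i‖ ^ 2 ≤ ∑ i, p i * r ^ 2 := by
          refine Finset.sum_le_sum fun i _ => ?_
          exact mul_le_mul_of_nonneg_left
            (pow_le_pow_left₀ (norm_nonneg _) (hu i) 2) (hp i)
      _ = r ^ 2 := by rw [← Finset.sum_mul, hsum, one_mul]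
  linarith

end helpers2

theorem refined_gruss {H : Type*} [NormedAddCommGroup H] [InnerProductSpace ℂ H]
    (N : ℕ) (hN : 1 ≤ N) (x y : Fin N → H) (p : Fin N → ℝ)
    (hp : ∀ i, 0 ≤ p i) (hsum : ∑ i, p i = 1) (a b : H) (r s : ℝ)
    (hr : 0 ≤ r) (hs : 0 ≤ s)
    (hx : ∀ i, ‖x i - a‖ ≤ r) (hy : ∀ i, ‖y i - b‖ ≤ s) :
    (∀ m n p' q : ℝ, 0 ≤ n → 0 ≤ q → n ≤ m → q ≤ p' →
        (m ^ 2 - n ^ 2) * (p' ^ 2 - q ^ 2) ≤ (m * p' - n * q) ^ 2) ∧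
    ‖(∑ i, (p i : ℂ) * ⟪x i, y i⟫_ℂ
        - ⟪∑ i, (p i : ℂ) • x i, ∑ i, (p i : ℂ) • y i⟫_ℂ)‖
      ≤ r * s - ‖∑ i, (p i : ℂ) • (x i - a)‖ * ‖∑ i, (p i : ℂ) • (y i - b)‖ := by
  have elem : ∀ m n p' q : ℝ, 0 ≤ n → 0 ≤ q → n ≤ m → q ≤ p' →
      (m ^ 2 - n ^ 2) * (p' ^ 2 - q ^ 2) ≤ (m * p' - n * q) ^ 2 := by
    intro m n p' q _ _ _ _
    nlinarith [sq_nonneg (m * q - n * p')]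
  refine ⟨elem, ?_⟩
  have key : ∀ (w : Fin N → H) (c : H), ∑ i, (p i : ℂ) • (w i - c) + c = ∑ i, (p i : ℂ) • w i := by
    intro w c
    have h1 : ∑ i, (p i : ℂ) • (w i - c) = ∑ i, (p i : ℂ) • w i - c := by
      simp only [smul_sub, Finset.sum_sub_distrib, rg_sum_const p hsum]
    rw [h1, sub_add_cancel]
  set U : H := ∑ i, (p i : ℂ) • (x i - a) with hUdef
  set V : H := ∑ i, (p i : ℂ) • (y i - b) with hVdef
  -- Identity A : shift by a, b
  have hA : ∑ i, (p i : ℂ) * ⟪x i, y i⟫_ℂ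
        - ⟪∑ i, (p i : ℂ) • x i, ∑ i, (p i : ℂ) • y i⟫_ℂ
      = ∑ i, (p i : ℂ) * ⟪x i - a, y i - b⟫_ℂ - ⟪U, V⟫_ℂ := by
    rw [hUdef, hVdef, ← rg_shift p hsum (fun i => x i - a) (fun i => y i - b) a b,
      key x a, key y b]
    simp only [sub_add_cancel]
  -- sum of p_i • (u_i - U) is zero
  have hzx : ∑ i, (p i : ℂ) • ((x i - a) - U) = 0 := by
    have h := key (fun i => x i - a) U
    simp only [← hUdef] at h
    exact add_right_cancel (h.trans (zero_add U).symm)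
  have hzy : ∑ i, (p i : ℂ) • ((y i - b) - V) = 0 := by
    have h := key (fun i => y i - b) V
    simp only [← hVdef] at h
    exact add_right_cancel (h.trans (zero_add V).symm)
  -- Identity B : recenter at U, V
  have hB : ∑ i, (p i : ℂ) * ⟪x i - a, y i - b⟫_ℂ - ⟪U, V⟫_ℂ
      = ∑ i, (p i : ℂ) * ⟪(x i - a) - U, (y i - b) - V⟫_ℂ := by
    have h := rg_shift p hsum (fun i => (x i - a) - U) (fun i => (y i - b) - V) U V
    simp only [hzx, hzy, sub_add_cancel, zero_add, inner_zero_left, sub_zero] at h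
    exact h
  rw [hA, hB]
  -- bound the absolute value by a weighted sum of products of norms
  have habs : ‖(∑ i, (p i : ℂ) * ⟪(x i - a) - U, (y i - b) - V⟫_ℂ)‖
      ≤ ∑ i, p i * (‖(x i - a) - U‖ * ‖(y i - b) - V‖) := by
    refine (norm_sum_le _ _).trans (Finset.sum_le_sum fun i _ => ?_)
    rw [norm_mul, Complex.norm_real, Real.norm_eq_abs, abs_of_nonneg (hp i)]
    refine mul_le_mul_of_nonneg_left ?_ (hp i)
    exact norm_inner_le_norm _ _
  -- Cauchy-Schwarz for the weighted sum
  have hCS : (∑ i, p i * (‖(x i - a) - U‖ * ‖(y i - b) - V‖)) ^ 2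
      ≤ (∑ i, p i * ‖(x i - a) - U‖ ^ 2) * (∑ i, p i * ‖(y i - b) - V‖ ^ 2) := by
    have h := Finset.sum_mul_sq_le_sq_mul_sq Finset.univ
      (fun i => Real.sqrt (p i) * ‖(x i - a) - U‖)
      (fun i => Real.sqrt (p i) * ‖(y i - b) - V‖)
    have e1 : ∀ i : Fin N, (Real.sqrt (p i) * ‖(x i - a) - U‖) *
        (Real.sqrt (p i) * ‖(y i - b) - V‖)
        = p i * (‖(x i - a) - U‖ * ‖(y i - b) - V‖) := by
      intro i
      have hss : Real.sqrt (p i) * Real.sqrt (p i) = p i := Real.mul_self_sqrt (hp i)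
      have hre : (Real.sqrt (p i) * ‖(x i - a) - U‖) * (Real.sqrt (p i) * ‖(y i - b) - V‖)
          = (Real.sqrt (p i) * Real.sqrt (p i)) * (‖(x i - a) - U‖ * ‖(y i - b) - V‖) := by
        ring
      rw [hre, hss]
    have e2 : ∀ i : Fin N, (Real.sqrt (p i) * ‖(x i - a) - U‖) ^ 2
        = p i * ‖(x i - a) - U‖ ^ 2 := by
      intro i; rw [mul_pow, Real.sq_sqrt (hp i)]
    have e3 : ∀ i : Fin N, (Real.sqrt (p i) * ‖(y i - b) - V‖) ^ 2
        = p i * ‖(y i - b) - V‖ ^ 2 := by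
      intro i; rw [mul_pow, Real.sq_sqrt (hp i)]
    simp only [e1, e2, e3] at h
    exact h
  -- variance bounds
  have hT1 : ∑ i, p i * ‖(x i - a) - U‖ ^ 2 ≤ r ^ 2 - ‖U‖ ^ 2 :=
    rg_variance p hp hsum (fun i => x i - a) r hx
  have hT2 : ∑ i, p i * ‖(y i - b) - V‖ ^ 2 ≤ s ^ 2 - ‖V‖ ^ 2 :=
    rg_variance p hp hsum (fun i => y i - b) s hy
  have hnr : ‖U‖ ≤ r := rg_norm_sum_le p hp hsum (fun i => x i - a) r hx
  have hqs : ‖V‖ ≤ s := rg_norm_sum_le p hp hsum (fun i => y i - b) s hy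
  -- combine everything
  set S : ℝ := ∑ i, p i * (‖(x i - a) - U‖ * ‖(y i - b) - V‖) with hSdef
  set T1 : ℝ := ∑ i, p i * ‖(x i - a) - U‖ ^ 2 with hT1def
  set T2 : ℝ := ∑ i, p i * ‖(y i - b) - V‖ ^ 2 with hT2def
  have hS0 : 0 ≤ S := Finset.sum_nonneg fun i _ =>
    mul_nonneg (hp i) (mul_nonneg (norm_nonneg _) (norm_nonneg _))
  have hT10 : 0 ≤ T1 := Finset.sum_nonneg fun i _ => mul_nonneg (hp i) (sq_nonneg _)
  have hT20 : 0 ≤ T2 := Finset.sum_nonneg fun i _ => mul_nonneg (hp i) (sq_nonneg _)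
  have hn0 : 0 ≤ ‖U‖ := norm_nonneg _
  have hq0 : 0 ≤ ‖V‖ := norm_nonneg _
  have hsq : 0 ≤ s ^ 2 - ‖V‖ ^ 2 := sub_nonneg.mpr (pow_le_pow_left₀ hq0 hqs 2)
  have hrq : 0 ≤ r ^ 2 - ‖U‖ ^ 2 := sub_nonneg.mpr (pow_le_pow_left₀ hn0 hnr 2)
  have hmid : T1 * T2 ≤ (r ^ 2 - ‖U‖ ^ 2) * (s ^ 2 - ‖V‖ ^ 2) :=
    mul_le_mul hT1 hT2 hT20 hrq
  have helem := elem r ‖U‖ s ‖V‖ hn0 hq0 hnr hqs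
  have hSB : S ^ 2 ≤ (r * s - ‖U‖ * ‖V‖) ^ 2 := by
    calc S ^ 2 ≤ T1 * T2 := hCS
      _ ≤ (r ^ 2 - ‖U‖ ^ 2) * (s ^ 2 - ‖V‖ ^ 2) := hmid
      _ ≤ (r * s - ‖U‖ * ‖V‖) ^ 2 := helem
  have hB0 : 0 ≤ r * s - ‖U‖ * ‖V‖ := sub_nonneg.mpr (mul_le_mul hnr hqs hq0 hr)
  have hSle : S ≤ r * s - ‖U‖ * ‖V‖ := by
    have h := Real.sqrt_le_sqrt hSB
    rwa [Real.sqrt_sq hS0, Real.sqrt_sq hB0] at h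
  exact habs.trans hSle
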